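/- Let p = Σ_{k=0}^{n} a_k(x,y) z^k be a homogeneous polynomial of degree n ≥ 1 with n odd, r = (n−1)/2, and let K_n = Σ_{k=0}^{r} μ_k^{(n)} z^k ∂_z^k be defined with the μ_k^{(n)} as in the even case (the unique solution of Σ_{k=0}^{r} B_{2i−1,k} μ_k = 0 for i = 1,…,r and Σ_{k=0}^{r} B_{n,k} μ_k = 1, where B_{ij} = i!/(i−j)! for i ≥ j, else 0). Then p is odd in z if and only if {K_n(p), z}_LP = 0. -/

import Mathlib

open Polynomial Finset
open MvPolynomial

/-- The operator `K_n = Σ_{k=0}^{r} μ_k z^k ∂_z^k`. -/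
noncomputable def Kop (r : ℕ) (mu : ℕ → ℝ)
    (p : Polynomial (MvPolynomial (Fin 2) ℝ)) : Polynomial (MvPolynomial (Fin 2) ℝ) :=
  ∑ k ∈ Finset.range (r + 1), mu k • (Polynomial.X ^ k * Polynomial.derivative^[k] p)

/-- The linear system determining the coefficients `μ_k^{(n)}`. -/
def muSystem (n r : ℕ) (mu : ℕ → ℝ) : Prop :=
  (∀ i ∈ Finset.Icc 1 r,
      ∑ k ∈ Finset.range (r + 1), ((2 * i - 1).descFactorial k : ℝ) * mu k = 0) ∧
    ∑ k ∈ Finset.range (r + 1), (n.descFactorial k : ℝ) * mu k = 1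

/-- The Lie–Poisson bracket `{f, z}_LP = x ∂_y f − y ∂_x f`, acting coefficientwise. -/
noncomputable def brZ (p : Polynomial (MvPolynomial (Fin 2) ℝ)) :
    Polynomial (MvPolynomial (Fin 2) ℝ) :=
  p.sum fun k a =>
    Polynomial.C (MvPolynomial.X 0 * MvPolynomial.pderiv 1 a
      - MvPolynomial.X 1 * MvPolynomial.pderiv 0 a) * Polynomial.X ^ k



lemma hasDerivAt_eval_aux (p : MvPolynomial (Fin 2) ℝ) (c0 c1 : ℝ → ℝ) (t d0 d1 : ℝ)
    (h0 : HasDerivAt c0 d0 t) (h1 : HasDerivAt c1 d1 t) :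
    HasDerivAt (fun s => MvPolynomial.eval ![c0 s, c1 s] p)
      (d0 * MvPolynomial.eval ![c0 t, c1 t] (pderiv 0 p)
        + d1 * MvPolynomial.eval ![c0 t, c1 t] (pderiv 1 p)) t := by
  induction p using MvPolynomial.induction_on with
  | C a => simpa using hasDerivAt_const t a
  | add p q hp hq =>
      have := hp.add hq
      simp only [map_add] at *
      convert this using 1
      · rfl
      · rfl
      · rfl
      ring
  | mul_X p i hp =>
      fin_cases i
      · have := hp.mul h0
        simp only [pderiv_mul, pderiv_X_self, pderiv_X_of_ne (by decide : (0:Fin 2) ≠ 1),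
          pderiv_X_of_ne (by decide : (1:Fin 2) ≠ 0)] at *
        convert this using 1
        · rfl
        · rfl
        · ext s; simp [mul_comm]
        · simp [Matrix.cons_val_zero]
          ring
      · have := hp.mul h1
        simp only [pderiv_mul, pderiv_X_self, pderiv_X_of_ne (by decide : (0:Fin 2) ≠ 1),
          pderiv_X_of_ne (by decide : (1:Fin 2) ≠ 0)] at *
        convert this using 1
        · rfl
        · rfl
        · ext s; simp [mul_comm]
        · simp
          ring

lemma eval_neg_of_isHomogeneous {a : MvPolynomial (Fin 2) ℝ} {d : ℕ}
    (h : a.IsHomogeneous d) (x : Fin 2 → ℝ) :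
    MvPolynomial.eval (fun i => -(x i)) a = (-1) ^ d * MvPolynomial.eval x a := by
  rw [MvPolynomial.eval_eq', MvPolynomial.eval_eq', Finset.mul_sum]
  apply Finset.sum_congr rfl
  intro m hm
  have hdm : ∑ i, m i = d := by
    have := h (MvPolynomial.mem_support_iff.mp hm)
    rw [← this, Finsupp.weight_apply, Finsupp.sum]
    simp only [Pi.one_apply, smul_eq_mul, mul_one]
    exact (Finset.sum_subset (Finset.subset_univ _)
      (fun i _ hi => Finsupp.notMem_support_iff.mp hi)).symm
  have : ∀ i : Fin 2, (-(x i)) ^ m i = (-1) ^ m i * (x i) ^ m i := by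
    intro i; rw [neg_pow]
  rw [Finset.prod_congr rfl fun i _ => this i, Finset.prod_mul_distrib,
    Finset.prod_pow_eq_pow_sum, hdm]
  ring

lemma rot_eq_zero_imp (a : MvPolynomial (Fin 2) ℝ) (d : ℕ) (hd : Odd d)
    (hhom : a.IsHomogeneous d)
    (h : MvPolynomial.X 0 * pderiv 1 a - MvPolynomial.X 1 * pderiv 0 a = 0) :
    a = 0 := by
  apply hhom.eq_zero_of_forall_eval_eq_zero
  intro x
  set c0 : ℝ → ℝ := fun s => x 0 * Real.cos s - x 1 * Real.sin s with hc0
  set c1 : ℝ → ℝ := fun s => x 0 * Real.sin s + x 1 * Real.cos s with hc1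
  set g : ℝ → ℝ := fun s => MvPolynomial.eval ![c0 s, c1 s] a with hg
  have hderiv : ∀ t, HasDerivAt g 0 t := by
    intro t
    have h0 : HasDerivAt c0 (-(c1 t)) t := by
      have := ((Real.hasDerivAt_cos t).const_mul (x 0)).sub
        ((Real.hasDerivAt_sin t).const_mul (x 1))
      convert this using 1
      · rfl
      · rfl
      · rfl
      simp [hc1]; ring
    have h1 : HasDerivAt c1 (c0 t) t := by
      have := ((Real.hasDerivAt_sin t).const_mul (x 0)).add
        ((Real.hasDerivAt_cos t).const_mul (x 1))
      convert this using 1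
      · rfl
      · rfl
      · rfl
      simp [hc0]; ring
    have := hasDerivAt_eval_aux a c0 c1 t (-(c1 t)) (c0 t) h0 h1
    have hz : -(c1 t) * MvPolynomial.eval ![c0 t, c1 t] (pderiv 0 a)
        + c0 t * MvPolynomial.eval ![c0 t, c1 t] (pderiv 1 a) = 0 := by
      have := congrArg (MvPolynomial.eval ![c0 t, c1 t]) h
      simp only [map_sub, map_mul, MvPolynomial.eval_X, map_zero] at this
      simp only [Matrix.cons_val_zero, Matrix.cons_val_one, Matrix.head_cons] at this
      linarith [this]
    rwa [hz] at this
  have hconst : g Real.pi = g 0 :=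
    is_const_of_deriv_eq_zero (fun t => (hderiv t).differentiableAt)
      (fun t => (hderiv t).deriv) _ _
  have hg0 : g 0 = MvPolynomial.eval x a := by
    show MvPolynomial.eval ![c0 0, c1 0] a = _
    have hv : (![c0 0, c1 0] : Fin 2 → ℝ) = x := by
      funext i; fin_cases i <;> simp [hc0, hc1]
    rw [hv]
  have hgpi : g Real.pi = -(MvPolynomial.eval x a) := by
    have : (![c0 Real.pi, c1 Real.pi] : Fin 2 → ℝ) = fun i => -(x i) := by
      funext i
      fin_cases i <;> simp [hc0, hc1]
    show MvPolynomial.eval ![c0 Real.pi, c1 Real.pi] a = _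
    rw [this, eval_neg_of_isHomogeneous hhom, hd.neg_one_pow]
    ring
  have := hgpi ▸ hg0 ▸ hconst
  linarith [this]

lemma S_ne_zero {n r : ℕ} (hnr : n = 2 * r + 1) {mu : ℕ → ℝ} (hmu : muSystem n r mu)
    {m : ℕ} (hm : Even m) :
    ∑ k ∈ Finset.range (r + 1), (m.descFactorial k : ℝ) * mu k ≠ 0 := by
  intro hzero
  set Q : Polynomial ℝ := ∑ k ∈ Finset.range (r + 1), Polynomial.C (mu k) * descPochhammer ℝ k
    with hQ
  have hQeval : ∀ j : ℕ, Q.eval (j : ℝ) = ∑ k ∈ Finset.range (r + 1),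
      (j.descFactorial k : ℝ) * mu k := by
    intro j
    rw [hQ, Polynomial.eval_finset_sum]
    apply Finset.sum_congr rfl
    intro k _
    rw [Polynomial.eval_mul, Polynomial.eval_C, descPochhammer_eval_eq_descFactorial]
    ring
  have hQdeg : Q.natDegree ≤ r := by
    apply (Polynomial.natDegree_sum_le _ _).trans
    apply (Finset.fold_max_le _).mpr ⟨Nat.zero_le r, ?_⟩
    · intro k hk
      simp only [Function.comp]
      apply (Polynomial.natDegree_mul_le).trans
      simp only [Polynomial.natDegree_C, zero_add]
      rw [descPochhammer_natDegree]
      exact Nat.lt_succ_iff.mp (Finset.mem_range.mp hk)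
  set s : Finset ℝ := insert (m : ℝ) ((Finset.Icc 1 r).image (fun i => ((2 * i - 1 : ℕ) : ℝ)))
    with hs
  have hinj : Set.InjOn (fun i : ℕ => ((2 * i - 1 : ℕ) : ℝ)) (Finset.Icc 1 r) := by
    intro i hi j hj hij
    have := Nat.cast_injective (R := ℝ) hij
    simp only [Finset.coe_Icc, Set.mem_Icc] at hi hj
    omega
  have hnm : (m : ℝ) ∉ (Finset.Icc 1 r).image (fun i => ((2 * i - 1 : ℕ) : ℝ)) := by
    simp only [Finset.mem_image, not_exists]
    rintro i ⟨hi, hc⟩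
    have := Nat.cast_injective (R := ℝ) hc
    simp only [Finset.mem_Icc] at hi
    rcases hm with ⟨l, hl⟩
    omega
  have hcard : r + 1 ≤ s.card := by
    rw [hs, Finset.card_insert_of_notMem hnm, Finset.card_image_of_injOn hinj,
      Nat.card_Icc]
    omega
  have hQ0 : Q = 0 := by
    apply Polynomial.eq_zero_of_natDegree_lt_card_of_eval_eq_zero' Q s
    · intro x hx
      rw [hs, Finset.mem_insert] at hx
      rcases hx with rfl | hx
      · rw [hQeval]; exact hzero
      · obtain ⟨i, hi, rfl⟩ := Finset.mem_image.mp hx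
        rw [hQeval]
        exact hmu.1 i hi
    · omega
  have := hQeval n
  rw [hQ0, hmu.2] at this
  simp at this

lemma Kop_coeff (r : ℕ) (mu : ℕ → ℝ) (p : Polynomial (MvPolynomial (Fin 2) ℝ)) (m : ℕ) :
    (Kop r mu p).coeff m
      = (∑ k ∈ Finset.range (r + 1), (m.descFactorial k : ℝ) * mu k) • p.coeff m := by
  rw [Kop, Polynomial.finset_sum_coeff, Finset.sum_smul]
  apply Finset.sum_congr rfl
  intro k _
  rw [Polynomial.coeff_smul, mul_comm ((Polynomial.X : Polynomial (MvPolynomial (Fin 2) ℝ)) ^ k), Polynomial.coeff_mul_X_pow']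
  by_cases hk : k ≤ m
  · rw [if_pos hk, Polynomial.coeff_iterate_derivative, Nat.sub_add_cancel hk,
      ← Nat.cast_smul_eq_nsmul ℝ, smul_smul, mul_comm]
  · rw [if_neg hk, smul_zero, Nat.descFactorial_eq_zero_iff_lt.mpr (by omega), Nat.cast_zero,
      zero_mul, zero_smul]

lemma brZ_coeff (q : Polynomial (MvPolynomial (Fin 2) ℝ)) (m : ℕ) :
    (brZ q).coeff m = MvPolynomial.X 0 * MvPolynomial.pderiv 1 (q.coeff m)
      - MvPolynomial.X 1 * MvPolynomial.pderiv 0 (q.coeff m) := by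
  rw [brZ, Polynomial.sum, Polynomial.finset_sum_coeff]
  rw [Finset.sum_eq_single m]
  · rw [Polynomial.coeff_C_mul, Polynomial.coeff_X_pow, if_pos rfl, mul_one]
  · intro k _ hk
    rw [Polynomial.coeff_C_mul, Polynomial.coeff_X_pow, if_neg (Ne.symm hk), mul_zero]
  · intro hm
    rw [Polynomial.notMem_support_iff.mp hm]
    simp

lemma coeff_comp_neg_X (p : Polynomial (MvPolynomial (Fin 2) ℝ)) (m : ℕ) :
    (p.comp (-Polynomial.X)).coeff m = (-1) ^ m * p.coeff m := by
  induction p using Polynomial.induction_on' with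
  | add p q hp hq => rw [Polynomial.add_comp, Polynomial.coeff_add, hp, hq,
      Polynomial.coeff_add, mul_add]
  | monomial k a =>
    rw [Polynomial.monomial_comp]
    have hX : ((-Polynomial.X : Polynomial (MvPolynomial (Fin 2) ℝ)) ^ k)
        = Polynomial.C ((-1) ^ k) * Polynomial.X ^ k := by
      rw [neg_pow (Polynomial.X : Polynomial (MvPolynomial (Fin 2) ℝ)),
        show (-1 : Polynomial (MvPolynomial (Fin 2) ℝ)) = Polynomial.C (-1) by simp, ← map_pow]
    rw [hX, ← mul_assoc, ← map_mul, Polynomial.coeff_C_mul, Polynomial.coeff_X_pow,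
      Polynomial.coeff_monomial]
    by_cases h : k = m
    · subst h; simp [mul_comm]
    · rw [if_neg (Ne.symm h), if_neg h, mul_zero, mul_zero]


lemma pderiv_of_isHomogeneous_zero {a : MvPolynomial (Fin 2) ℝ}
    (h : a.IsHomogeneous 0) (i : Fin 2) : MvPolynomial.pderiv i a = 0 := by
  have ha : a = MvPolynomial.C (MvPolynomial.coeff 0 a) := by
    ext d
    rcases eq_or_ne d 0 with rfl | hd
    · simp
    · rw [h.coeff_eq_zero (by simpa [Finsupp.degree_eq_zero_iff] using hd),
        MvPolynomial.coeff_C, if_neg (Ne.symm hd)]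
  rw [ha, MvPolynomial.pderiv_C]

theorem z_odd_iff_bracket_Kop_eq_zero_of_odd_degree
    (n : ℕ) (hn : 1 ≤ n) (hodd : Odd n)
    (p : Polynomial (MvPolynomial (Fin 2) ℝ))
    (hdeg : p.natDegree ≤ n)
    (hhom : ∀ k ≤ n, (p.coeff k).IsHomogeneous (n - k))
    (mu : ℕ → ℝ) (hmu : muSystem n ((n - 1) / 2) mu)
    (huniq : ∀ mu' : ℕ → ℝ, muSystem n ((n - 1) / 2) mu' →
      ∀ k ∈ Finset.range ((n - 1) / 2 + 1), mu' k = mu k) :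
    p.comp (-Polynomial.X) = -p ↔ brZ (Kop ((n - 1) / 2) mu p) = 0 := by
  set r := (n - 1) / 2 with hr
  have hnr : n = 2 * r + 1 := by
    obtain ⟨k, hk⟩ := hodd
    omega
  have hL : (p.comp (-Polynomial.X) = -p) ↔ ∀ m, Even m → p.coeff m = 0 := by
    constructor
    · intro h m hm
      have h1 := congrArg (fun q : Polynomial (MvPolynomial (Fin 2) ℝ) => q.coeff m) h
      simp only [coeff_comp_neg_X, Polynomial.coeff_neg] at h1
      rw [hm.neg_one_pow, one_mul] at h1
      have h2 : p.coeff m + p.coeff m = 0 := add_eq_zero_iff_eq_neg.mpr h1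
      have h3 : (2 : MvPolynomial (Fin 2) ℝ) * p.coeff m = 0 := by
        rw [two_mul]; exact h2
      rcases mul_eq_zero.mp h3 with h | h
      · exact absurd h two_ne_zero
      · exact h
    · intro h
      ext m
      rw [coeff_comp_neg_X, Polynomial.coeff_neg]
      rcases Nat.even_or_odd m with he | ho
      · rw [h m he, mul_zero, neg_zero]
      · rw [ho.neg_one_pow]; ring
  rw [hL]
  constructor
  · intro h
    ext m
    rw [brZ_coeff, Kop_coeff, Polynomial.coeff_zero]
    rcases Nat.even_or_odd m with he | ho
    · rw [h m he]
      simp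
    · rcases lt_trichotomy m n with hlt | rfl | hgt
      · have hi : (m + 1) / 2 ∈ Finset.Icc 1 r := by
          rw [Finset.mem_Icc]
          obtain ⟨l, hl⟩ := ho
          omega
        have hm' : 2 * ((m + 1) / 2) - 1 = m := by
          obtain ⟨l, hl⟩ := ho
          omega
        have hS : ∑ k ∈ Finset.range (r + 1), (m.descFactorial k : ℝ) * mu k = 0 := by
          have := hmu.1 _ hi
          rwa [hm'] at this
        rw [hS, zero_smul]
        simp
      · have h0 : (p.coeff m).IsHomogeneous 0 := by
          have := hhom m le_rfl
          rwa [Nat.sub_self] at this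
        have hp0 : ∀ i, MvPolynomial.pderiv i (p.coeff m) = 0 :=
          pderiv_of_isHomogeneous_zero h0
        rw [MvPolynomial.smul_eq_C_mul]
        simp [MvPolynomial.pderiv_mul, hp0, MvPolynomial.pderiv_C]
      · rw [Polynomial.coeff_eq_zero_of_natDegree_lt (lt_of_le_of_lt hdeg hgt)]
        simp
  · intro h m hm
    by_cases hmn : m ≤ n
    · have hS := S_ne_zero hnr hmu hm
      have h1 := congrArg (fun q : Polynomial (MvPolynomial (Fin 2) ℝ) => q.coeff m) h
      simp only [brZ_coeff, Kop_coeff, Polynomial.coeff_zero] at h1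
      simp only [MvPolynomial.smul_eq_C_mul, MvPolynomial.pderiv_mul, MvPolynomial.pderiv_C,
        zero_mul, mul_zero, add_zero, zero_add] at h1
      have h2 : MvPolynomial.C (∑ k ∈ Finset.range (r + 1), (m.descFactorial k : ℝ) * mu k)
          * (MvPolynomial.X 0 * MvPolynomial.pderiv 1 (p.coeff m)
            - MvPolynomial.X 1 * MvPolynomial.pderiv 0 (p.coeff m)) = 0 := by
        rw [← h1]; ring
      rcases mul_eq_zero.mp h2 with hc | hrot
      · exact absurd (MvPolynomial.C_eq_zero.mp hc) hS
      have hparity : Odd (n - m) := by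
        obtain ⟨l, hl⟩ := hm
        have hmlt : m < n := lt_of_le_of_ne hmn (by rintro rfl; omega)
        exact ⟨r - l, by omega⟩
      exact rot_eq_zero_imp _ (n - m) hparity (hhom m hmn) hrot
    · exact Polynomial.coeff_eq_zero_of_natDegree_lt (lt_of_le_of_lt hdeg (by omega))
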